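/- Let w : ℝ → (0,∞) be a continuous 2π-periodic function that is angle-separable and satisfies max w > min w (w is nonconstant). Then there exists α₀ ∈ ℝ such that w(α₀) = max_{t∈ℝ} w(t) and w(α₀ + π) = min_{t∈ℝ} w(t); that is, w attains its maximum and minimum at a pair of antipodal angles. -/
import Mathlib

open Real Set

private lemma reduce_per {f : ℝ → ℝ} {P : ℝ} (hf : Function.Periodic f P) (hP : 0 < P)
    (x y : ℝ) : ∃ c ∈ Set.Ico 0 P, f y = f (x + c) := by
  have hg : Function.Periodic (fun u => f (x + u)) P := by
    intro u; simp only [← add_assoc]; exact hf (x + u)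
  obtain ⟨c, hc, hgc⟩ := hg.exists_mem_Ico₀ hP (y - x)
  refine ⟨c, hc, ?_⟩
  simpa using hgc

private lemma no_small_period {w : ℝ → ℝ} (hcont : Continuous w)
    (hsep : ∀ α : ℝ,
      (∀ θ ∈ Set.Ioo (0 : ℝ) Real.pi, w (α - θ) ≤ w (α + θ)) ∨
      (∀ θ ∈ Set.Ioo (0 : ℝ) Real.pi, w (α + θ) ≤ w (α - θ)))
    (hnc : ∃ s t : ℝ, w s < w t)
    {P : ℝ} (hwP : Function.Periodic w P) (hP0 : 0 < P) (hPpi : P ≤ Real.pi) : False := by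
  obtain ⟨b, hbmem, hbmin⟩ := (isCompact_Icc (a := (0:ℝ)) (b := P)).exists_isMinOn (nonempty_Icc.mpr hP0.le) hcont.continuousOn
  have hbglob : ∀ t, w b ≤ w t := by
    intro t
    obtain ⟨c, hc, hct⟩ := reduce_per hwP hP0 0 t
    rw [hct]
    exact hbmin ⟨by linarith [hc.1], by linarith [hc.2]⟩
  obtain ⟨a, hamem, hamax⟩ := (isCompact_Icc (a := b) (b := b + P)).exists_isMaxOn (nonempty_Icc.mpr (by linarith)) hcont.continuousOn
  have haglob : ∀ t, w t ≤ w a := by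
    intro t
    obtain ⟨c, hc, hct⟩ := reduce_per hwP hP0 b t
    rw [hct]
    exact hamax ⟨by linarith [hc.1], by linarith [hc.2]⟩
  have hba : w b < w a := by
    obtain ⟨s, t, hst⟩ := hnc
    exact lt_of_le_of_lt (hbglob s) (lt_of_lt_of_le hst (haglob t))
  have hane : a ≠ b := fun h => by rw [h] at hba; exact lt_irrefl _ hba
  have hane' : a ≠ b + P := by
    intro h
    have : w (b + P) = w b := hwP b
    rw [h, this] at hba; exact lt_irrefl _ hba
  have hab1 : b < a := lt_of_le_of_ne hamem.1 (Ne.symm hane)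
  have hab2 : a < b + P := lt_of_le_of_ne hamem.2 hane'
  set μ := (a + b) / 2 with hμ
  set δ := (a - b) / 2 with hδ
  have hδ0 : 0 < δ := by simp only [hδ]; linarith
  have hδP : δ < P / 2 := by simp only [hδ]; linarith
  have hpi : 0 < Real.pi := Real.pi_pos
  rcases hsep μ with hc | hc
  · have h := hc (P - δ) ⟨by linarith, by linarith⟩
    have e1 : μ - (P - δ) = a - P := by simp only [hμ, hδ]; ring
    have e2 : μ + (P - δ) = b + P := by simp only [hμ, hδ]; ring
    rw [e1, e2] at h
    have e3 : w (a - P) = w a := by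
      have := hwP (a - P); rw [sub_add_cancel] at this; exact this.symm
    have e4 : w (b + P) = w b := hwP b
    rw [e3, e4] at h
    linarith
  · have h := hc δ ⟨hδ0, by linarith⟩
    have e1 : μ + δ = a := by simp only [hμ, hδ]; ring
    have e2 : μ - δ = b := by simp only [hμ, hδ]; ring
    rw [e1, e2] at h
    linarith


private lemma axis_ext {w : ℝ → ℝ} (hw : Function.Periodic w (2 * Real.pi)) (β : ℝ)
    (h : ∀ θ ∈ Set.Ioo (0 : ℝ) Real.pi, w (β + θ) = w (β - θ)) :
    ∀ s : ℝ, w (β + s) = w (β - s) := by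
  have hpi := Real.pi_pos
  have base1 : ∀ s ∈ Set.Icc (0 : ℝ) Real.pi, w (β + s) = w (β - s) := by
    intro s hs
    rcases eq_or_lt_of_le hs.1 with h0 | h0
    · rw [← h0]; norm_num
    rcases eq_or_lt_of_le hs.2 with h1 | h1
    · rw [h1]
      have := hw (β - Real.pi)
      rw [show β - Real.pi + 2 * Real.pi = β + Real.pi by ring] at this
      exact this
    · exact h s ⟨h0, h1⟩
  have base : ∀ s ∈ Set.Icc (0 : ℝ) (2 * Real.pi), w (β + s) = w (β - s) := by
    intro s hs
    by_cases hsp : s ≤ Real.pi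
    · exact base1 s ⟨hs.1, hsp⟩
    · push_neg at hsp
      have h1 := base1 (2 * Real.pi - s) ⟨by linarith [hs.2], by linarith⟩
      have e1 : w (β + s) = w (β + s - 2 * Real.pi) := by
        have := hw (β + s - 2 * Real.pi)
        rw [show β + s - 2 * Real.pi + 2 * Real.pi = β + s by ring] at this
        exact this
      have e2 : w (β - s) = w (β - s + 2 * Real.pi) := (hw (β - s)).symm
      rw [e1, e2,
        show β + s - 2 * Real.pi = β - (2 * Real.pi - s) by ring,
        show β - s + 2 * Real.pi = β + (2 * Real.pi - s) by ring]
      exact h1.symm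
  intro s
  set D : ℝ → ℝ := fun u => w (β + u) - w (β - u) with hD
  have hDper : Function.Periodic D (2 * Real.pi) := by
    intro u
    simp only [hD]
    have e1 : w (β + (u + 2 * Real.pi)) = w (β + u) := by
      have := hw (β + u); rw [add_assoc] at this; exact this
    have e2 : w (β - (u + 2 * Real.pi)) = w (β - u) := by
      have := hw (β - (u + 2 * Real.pi))
      rw [show β - (u + 2 * Real.pi) + 2 * Real.pi = β - u by ring] at this
      exact this.symm
    rw [e1, e2]
  obtain ⟨c, hc, hsc⟩ := reduce_per hDper Real.two_pi_pos 0 s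
  have hDc : D c = 0 := by
    have := base c ⟨hc.1, hc.2.le⟩
    simp only [hD]; linarith [this]
  have : D s = 0 := by rw [hsc, zero_add]; exact hDc
  simp only [hD] at this
  linarith

private lemma unimodal {w : ℝ → ℝ} (hw : Function.Periodic w (2 * Real.pi)) (β : ℝ)
    (axis : ∀ s : ℝ, w (β + s) = w (β - s))
    (mono : ∀ x y, β ≤ x → x ≤ y → y ≤ β + Real.pi → w x ≤ w y) :
    (∀ t, w t ≤ w (β + Real.pi)) ∧ (∀ t, w β ≤ w t) := by
  have hpi := Real.pi_pos
  have key : ∀ t, w β ≤ w t ∧ w t ≤ w (β + Real.pi) := by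
    intro t
    obtain ⟨c, hc, htc⟩ := reduce_per hw Real.two_pi_pos (β - Real.pi) t
    set s := β - Real.pi + c with hs
    have hs1 : β - Real.pi ≤ s := by simp only [hs]; linarith [hc.1]
    have hs2 : s < β + Real.pi := by simp only [hs]; linarith [hc.2]
    rw [htc]
    by_cases hsb : β ≤ s
    · exact ⟨mono β s le_rfl hsb hs2.le, mono s (β + Real.pi) hsb hs2.le le_rfl⟩
    · push_neg at hsb
      have hrefl : w s = w (2 * β - s) := by
        have := axis (β - s)
        rw [show β - (β - s) = s by ring, show β + (β - s) = 2 * β - s by ring] at this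
        exact this.symm
      rw [hrefl]
      constructor
      · exact mono β (2 * β - s) le_rfl (by linarith) (by linarith)
      · exact mono (2 * β - s) (β + Real.pi) (by linarith) (by linarith) le_rfl
  exact ⟨fun t => (key t).2, fun t => (key t).1⟩

/-- A continuous, positive, 2π-periodic, angle-separable, nonconstant
function `w` on `ℝ` attains its maximum and minimum at a pair of antipodal angles. -/
theorem stmt_0 (w : ℝ → ℝ)
    (hpos : ∀ t, 0 < w t)
    (hcont : Continuous w)
    (hper : ∀ t, w (t + 2 * Real.pi) = w t)
    (hsep : ∀ α : ℝ,
      (∀ θ ∈ Set.Ioo (0 : ℝ) Real.pi, w (α - θ) ≤ w (α + θ)) ∨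
      (∀ θ ∈ Set.Ioo (0 : ℝ) Real.pi, w (α + θ) ≤ w (α - θ)))
    (hnc : ∃ s t : ℝ, w s < w t) :
    ∃ α₀ : ℝ, (∀ t, w t ≤ w α₀) ∧ (∀ t, w (α₀ + Real.pi) ≤ w t) := by
  have hpi := Real.pi_pos
  have hw : Function.Periodic w (2 * Real.pi) := hper
  -- the two closed sets
  set A : Set ℝ := {α | ∀ θ ∈ Set.Ioo (0 : ℝ) Real.pi, w (α - θ) ≤ w (α + θ)} with hAdef
  set B : Set ℝ := {α | ∀ θ ∈ Set.Ioo (0 : ℝ) Real.pi, w (α + θ) ≤ w (α - θ)} with hBdef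
  have hAclosed : IsClosed A := by
    have : A = ⋂ θ ∈ Set.Ioo (0 : ℝ) Real.pi, {α | w (α - θ) ≤ w (α + θ)} := by
      ext α; simp [hAdef, Set.mem_iInter₂]
    rw [this]
    exact isClosed_biInter fun θ _ => isClosed_le
      (hcont.comp (continuous_id.sub continuous_const))
      (hcont.comp (continuous_id.add continuous_const))
  have hBclosed : IsClosed B := by
    have : B = ⋂ θ ∈ Set.Ioo (0 : ℝ) Real.pi, {α | w (α + θ) ≤ w (α - θ)} := by
      ext α; simp [hBdef, Set.mem_iInter₂]
    rw [this]
    exact isClosed_biInter fun θ _ => isClosed_le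
      (hcont.comp (continuous_id.add continuous_const))
      (hcont.comp (continuous_id.sub continuous_const))
  have hcover : ∀ α : ℝ, α ∈ A ∪ B := fun α => hsep α
  -- A is not everything
  have hnotA : ¬ ∀ α : ℝ, α ∈ A := by
    intro hall
    obtain ⟨s, t, hst⟩ := hnc
    -- w is "nondecreasing around the circle": w x ≤ w (x + c) for c ∈ (0, 2π)
    have hstep : ∀ x : ℝ, ∀ c ∈ Set.Ioo (0:ℝ) (2 * Real.pi), w x ≤ w (x + c) := by
      intro x c hc
      have := hall (x + c / 2) (c / 2) ⟨by linarith [hc.1], by linarith [hc.2]⟩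
      rw [show x + c / 2 - c / 2 = x by ring, show x + c / 2 + c / 2 = x + c by ring] at this
      exact this
    obtain ⟨c, hc, hcs⟩ := reduce_per hw Real.two_pi_pos t s
    rcases eq_or_lt_of_le hc.1 with h0 | h0
    · rw [hcs, ← h0, add_zero] at hst; exact lt_irrefl _ hst
    · have := hstep t c ⟨h0, hc.2⟩
      rw [← hcs] at this; linarith
  have hnotB : ¬ ∀ α : ℝ, α ∈ B := by
    intro hall
    obtain ⟨s, t, hst⟩ := hnc
    have hstep : ∀ x : ℝ, ∀ c ∈ Set.Ioo (0:ℝ) (2 * Real.pi), w (x + c) ≤ w x := by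
      intro x c hc
      have := hall (x + c / 2) (c / 2) ⟨by linarith [hc.1], by linarith [hc.2]⟩
      rw [show x + c / 2 - c / 2 = x by ring, show x + c / 2 + c / 2 = x + c by ring] at this
      exact this
    obtain ⟨c, hc, hcs⟩ := reduce_per hw Real.two_pi_pos s t
    rcases eq_or_lt_of_le hc.1 with h0 | h0
    · rw [hcs, ← h0, add_zero] at hst; exact lt_irrefl _ hst
    · have := hstep s c ⟨h0, hc.2⟩
      rw [← hcs] at this; linarith
  push_neg at hnotA hnotB
  obtain ⟨ξB, hξB⟩ := hnotA
  obtain ⟨ξA, hξA⟩ := hnotB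
  have hξB' : ξB ∈ B := (hcover ξB).resolve_left hξB
  have hξA' : ξA ∈ A := (hcover ξA).resolve_right hξA
  -- existence of an axis of symmetry
  obtain ⟨α', -, hα'A, hα'B⟩ := isPreconnected_closed_iff.mp isPreconnected_univ A B
    hAclosed hBclosed (fun x _ => hcover x) ⟨ξA, trivial, hξA'⟩ ⟨ξB, trivial, hξB'⟩
  have haxis' : ∀ θ ∈ Set.Ioo (0 : ℝ) Real.pi, w (α' + θ) = w (α' - θ) :=
    fun θ hθ => le_antisymm (hα'B θ hθ) (hα'A θ hθ)
  have haxis : ∀ s : ℝ, w (α' + s) = w (α' - s) := axis_ext hw α' haxis'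
  -- no second axis strictly inside (α', α' + π)
  have hnosecond : ∀ ξ ∈ Set.Ioo α' (α' + Real.pi), ξ ∈ A → ξ ∈ B → False := by
    intro ξ hξmem hA2 hB2
    have haxisξ' : ∀ θ ∈ Set.Ioo (0 : ℝ) Real.pi, w (ξ + θ) = w (ξ - θ) :=
      fun θ hθ => le_antisymm (hB2 θ hθ) (hA2 θ hθ)
    have haxisξ : ∀ s : ℝ, w (ξ + s) = w (ξ - s) := axis_ext hw ξ haxisξ'
    set d := ξ - α' with hd
    have hd0 : 0 < d := by simp only [hd]; linarith [hξmem.1]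
    have hdpi : d < Real.pi := by simp only [hd]; linarith [hξmem.2]
    have htrans : ∀ t : ℝ, w (t + 2 * d) = w t := by
      intro t
      have e1 := haxisξ (t + 2 * d - ξ)
      rw [show ξ + (t + 2 * d - ξ) = t + 2 * d by ring] at e1
      have e2 := haxis (α' - t)
      rw [show α' - (α' - t) = t by ring] at e2
      rw [e1, show ξ - (t + 2 * d - ξ) = α' + (α' - t) by simp only [hd]; ring, e2]
    -- subgroup of periods
    set S : AddSubgroup ℝ :=
      { carrier := {c : ℝ | ∀ t, w (t + c) = w t}
        zero_mem' := by intro t; rw [add_zero]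
        add_mem' := by
          intro c₁ c₂ h₁ h₂ t
          rw [← add_assoc, h₂ (t + c₁), h₁ t]
        neg_mem' := by
          intro c hc t
          have := hc (t + -c)
          rw [show t + -c + c = t by ring] at this
          exact this.symm } with hS
    have h2d : (2 * d) ∈ S := htrans
    have h2pi : (2 * Real.pi) ∈ S := hper
    rcases S.dense_or_cyclic with hdense | ⟨a, hSa⟩
    · -- dense subgroup of periods ⟹ w constant, contradiction
      obtain ⟨s, t, hst⟩ := hnc
      have hCclosed : IsClosed {c : ℝ | w (s + c) = w s} :=
        isClosed_eq (hcont.comp (continuous_const.add continuous_id)) continuous_const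
      have hsub : (S : Set ℝ) ⊆ {c : ℝ | w (s + c) = w s} := by
        intro c hc
        have hc' : ∀ u, w (u + c) = w u := hc
        have := hc' s
        rwa [Set.mem_setOf_eq]
      have hclos : closure (S : Set ℝ) ⊆ {c : ℝ | w (s + c) = w s} :=
        hCclosed.closure_subset_iff.mpr hsub
      have hmem : (t - s) ∈ {c : ℝ | w (s + c) = w s} := by
        apply hclos
        rw [hdense.closure_eq]
        trivial
      have : w t = w s := by
        have := hmem
        rwa [Set.mem_setOf_eq, show s + (t - s) = t by ring] at this
      linarith
    · -- cyclic: small period, contradiction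
      rw [hSa] at h2d h2pi
      obtain ⟨n, hn⟩ := AddSubgroup.mem_closure_singleton.mp h2pi
      obtain ⟨m, hm⟩ := AddSubgroup.mem_closure_singleton.mp h2d
      rw [zsmul_eq_mul] at hn hm
      have ha0 : a ≠ 0 := by
        intro h
        rw [h, mul_zero] at hn
        linarith
      set P := |a| with hPdef
      have hP0 : 0 < P := abs_pos.mpr ha0
      have haS : a ∈ S := by rw [hSa]; exact AddSubgroup.mem_closure_singleton_self a
      have hPS : P ∈ S := by
        rcases abs_choice a with h | h
        · rw [hPdef, h]; exact haS
        · rw [hPdef, h]; exact S.neg_mem haS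
      have hwPper : Function.Periodic w P := fun u => hPS u
      have hNP : |(n : ℝ)| * P = 2 * Real.pi := by
        rw [← abs_mul, hn]
        exact abs_of_pos Real.two_pi_pos
      have hMP : |(m : ℝ)| * P = 2 * d := by
        rw [← abs_mul, hm]
        exact abs_of_pos (by linarith)
      have hm0 : m ≠ 0 := by
        intro h
        rw [h] at hm; push_cast at hm; rw [zero_mul] at hm; linarith
      have hM1 : (1 : ℝ) ≤ |(m : ℝ)| := by
        have : (1 : ℤ) ≤ |m| := Int.one_le_abs hm0
        calc (1:ℝ) ≤ ((|m| : ℤ) : ℝ) := by exact_mod_cast this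
          _ = |(m : ℝ)| := by push_cast; ring
      have hP2d : P ≤ 2 * d := by nlinarith
      have hN2 : (2 : ℝ) ≤ |(n : ℝ)| := by
        have hN1 : (1 : ℝ) < |(n : ℝ)| := by nlinarith
        have : (1 : ℤ) < |n| := by
          by_contra hcon
          push_neg at hcon
          have : ((|n| : ℤ) : ℝ) ≤ 1 := by exact_mod_cast hcon
          rw [show ((|n| : ℤ) : ℝ) = |(n : ℝ)| by push_cast; ring] at this
          linarith
        have h2 : (2 : ℤ) ≤ |n| := this
        calc (2:ℝ) ≤ ((|n| : ℤ) : ℝ) := by exact_mod_cast h2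
          _ = |(n : ℝ)| := by push_cast; ring
      have hPpi : P ≤ Real.pi := by nlinarith
      exact no_small_period hcont hsep hnc hwPper hP0 hPpi
  -- main case split
  by_cases hCA : ∀ ρ ∈ Set.Ioo α' (α' + Real.pi), ρ ∈ A
  · have mono : ∀ x y, α' ≤ x → x ≤ y → y ≤ α' + Real.pi → w x ≤ w y := by
      intro x y hx hxy hy
      rcases eq_or_lt_of_le hxy with h | h
      · rw [h]
      have hmem : (x + y) / 2 ∈ Set.Ioo α' (α' + Real.pi) := ⟨by linarith, by linarith⟩
      have := hCA _ hmem ((y - x) / 2) ⟨by linarith, by linarith⟩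
      rw [show (x + y) / 2 - (y - x) / 2 = x by ring,
        show (x + y) / 2 + (y - x) / 2 = y by ring] at this
      exact this
    obtain ⟨hmax, hmin⟩ := unimodal hw α' haxis mono
    refine ⟨α' + Real.pi, hmax, fun t => ?_⟩
    have he : w (α' + Real.pi + Real.pi) = w α' := by
      have := hper α'
      rwa [show α' + 2 * Real.pi = α' + Real.pi + Real.pi by ring] at this
    rw [he]; exact hmin t
  · by_cases hCB : ∀ ρ ∈ Set.Ioo α' (α' + Real.pi), ρ ∈ B
    · have anti : ∀ x y, α' ≤ x → x ≤ y → y ≤ α' + Real.pi → w y ≤ w x := by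
        intro x y hx hxy hy
        rcases eq_or_lt_of_le hxy with h | h
        · rw [h]
        have hmem : (x + y) / 2 ∈ Set.Ioo α' (α' + Real.pi) := ⟨by linarith, by linarith⟩
        have := hCB _ hmem ((y - x) / 2) ⟨by linarith, by linarith⟩
        rw [show (x + y) / 2 - (y - x) / 2 = x by ring,
          show (x + y) / 2 + (y - x) / 2 = y by ring] at this
        exact this
      set β := α' + Real.pi with hβ
      have axisβ : ∀ s : ℝ, w (β + s) = w (β - s) := by
        intro s
        have e1 : w (β + s) = w (α' - (Real.pi + s)) := by
          have := haxis (Real.pi + s)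
          rwa [show α' + (Real.pi + s) = β + s by rw [hβ]; ring] at this
        have e2 : w (α' - (Real.pi + s)) = w (β - s) := by
          have := hper (α' - (Real.pi + s))
          rw [show α' - (Real.pi + s) + 2 * Real.pi = β - s by rw [hβ]; ring] at this
          exact this.symm
        rw [e1, e2]
      have monoβ : ∀ x y, β ≤ x → x ≤ y → y ≤ β + Real.pi → w x ≤ w y := by
        intro x y hx hxy hy
        have ex : w x = w (2 * β - x) := by
          have := axisβ (x - β)
          rwa [show β + (x - β) = x by ring, show β - (x - β) = 2 * β - x by ring] at this
        have ey : w y = w (2 * β - y) := by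
          have := axisβ (y - β)
          rwa [show β + (y - β) = y by ring, show β - (y - β) = 2 * β - y by ring] at this
        rw [ex, ey]
        exact anti (2 * β - y) (2 * β - x) (by rw [hβ] at hy ⊢; linarith)
          (by linarith) (by rw [hβ] at hx ⊢; linarith)
      obtain ⟨hmax, hmin⟩ := unimodal hw β axisβ monoβ
      refine ⟨β + Real.pi, hmax, fun t => ?_⟩
      have he : w (β + Real.pi + Real.pi) = w β := by
        have := hper β
        rwa [show β + 2 * Real.pi = β + Real.pi + Real.pi by ring] at this
      rw [he]; exact hmin t
    · push_neg at hCA hCB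
      obtain ⟨ρ₁, hρ₁mem, hρ₁⟩ := hCA
      obtain ⟨ρ₂, hρ₂mem, hρ₂⟩ := hCB
      have hρ₁B : ρ₁ ∈ B := (hcover ρ₁).resolve_left hρ₁
      have hρ₂A : ρ₂ ∈ A := (hcover ρ₂).resolve_right hρ₂
      obtain ⟨ξ, hξu, hξA2, hξB2⟩ := isPreconnected_closed_iff.mp isPreconnected_uIcc A B
        hAclosed hBclosed (fun x _ => hcover x) ⟨ρ₂, Set.left_mem_uIcc, hρ₂A⟩
        ⟨ρ₁, Set.right_mem_uIcc, hρ₁B⟩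
      have hξmem : ξ ∈ Set.Ioo α' (α' + Real.pi) := by
        rcases Set.mem_uIcc.mp hξu with ⟨h1, h2⟩ | ⟨h1, h2⟩
        · exact ⟨lt_of_lt_of_le hρ₂mem.1 h1, lt_of_le_of_lt h2 hρ₁mem.2⟩
        · exact ⟨lt_of_lt_of_le hρ₁mem.1 h1, lt_of_le_of_lt h2 hρ₂mem.2⟩
      exact (hnosecond ξ hξmem hξA2 hξB2).elim
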